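/- If F is non-redundant, then every simple r→t path P in G decomposes uniquely as P = P_R · (u_i v_i) · P_T for some i, where P_R is a (possibly trivial) simple r→u_i path entirely contained in R and P_T is a (possibly trivial) simple v_i→t path entirely contained in T. In particular, P uses exactly one edge of F, never re-enters R after leaving it, and never leaves T after entering it. -/

import Mathlib

/-- `S` is a strongly connected component of the digraph `E`. -/
def IsSCC {n : ℕ} (E : Fin n → Fin n → Prop) (S : Set (Fin n)) : Prop :=
  S.Nonempty ∧ (∀ u ∈ S, ∀ v ∈ S, Relation.ReflTransGen E u v) ∧
    ∀ u ∈ S, ∀ v, Relation.ReflTransGen E u v → Relation.ReflTransGen E v u → v ∈ S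

/-- A simple `u → v` path in `G`: an injective sequence of `ℓ+1` vertices starting at
`u`, ending at `v`, with consecutive pairs being edges of `G`. -/
abbrev SPath (n : ℕ) (E : Fin n → Fin n → Prop) (u v : Fin n) :=
  Σ ℓ : Fin n, {f : Fin ((ℓ : ℕ) + 1) → Fin n //
    Function.Injective f ∧ f 0 = u ∧ f (Fin.last (ℓ : ℕ)) = v ∧
      ∀ i : Fin (ℓ : ℕ), E (f i.castSucc) (f i.succ)}

private lemma scc_mem_of_path {n : ℕ} {E : Fin n → Fin n → Prop} {S : Set (Fin n)}
    (hS : IsSCC E S) {y : Fin n} (hy : y ∈ S) :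
    ∀ x, Relation.ReflTransGen E x y → x ∈ S →
      Relation.ReflTransGen (fun a b => E a b ∧ a ∈ S ∧ b ∈ S) x y := by
  intro x h
  induction h using Relation.ReflTransGen.head_induction_on with
  | refl => intro _; exact .refl
  | head hstep htail ih =>
    intro ha
    rename_i a c
    have hc : c ∈ S := hS.2.2 a ha c (.single hstep) (htail.trans (hS.2.1 y hy a ha))
    exact .head ⟨hstep, ha, hc⟩ (ih hc)

private lemma scc_reach' {n : ℕ} {E E' : Fin n → Fin n → Prop} {S : Set (Fin n)}
    (hS : IsSCC E S) (hE' : ∀ a b, E a b → a ∈ S → b ∈ S → E' a b) :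
    ∀ x ∈ S, ∀ y ∈ S, Relation.ReflTransGen E' x y := by
  intro x hx y hy
  exact Relation.ReflTransGen.mono
    (fun a b (h : E a b ∧ a ∈ S ∧ b ∈ S) => hE' a b h.1 h.2.1 h.2.2) _ _ (scc_mem_of_path hS hy x (hS.2.1 x hx y hy) hx)

private lemma chain_reach' {n : ℕ} (E : Fin n → Fin n → Prop) (g : ℕ → Fin n) (a : ℕ) :
    ∀ b, a ≤ b → (∀ m, a ≤ m → m < b → E (g m) (g (m + 1))) →
      Relation.ReflTransGen E (g a) (g b) := by
  intro b
  induction b with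
  | zero => intro h _; obtain rfl : a = 0 := Nat.le_zero.mp h; exact .refl
  | succ b ih =>
    intro hab hg
    rcases eq_or_lt_of_le hab with h | h
    · subst h; exact .refl
    · exact .tail (ih (by omega) (fun m h1 h2 => hg m h1 (by omega))) (hg b (by omega) (by omega))

/-- If `F` (the set of all edges from SCC `R` to SCC `T`, `R ≠ T`) is non-redundant,
then every simple `r → t` path `P` decomposes uniquely as `P_R · (u_i v_i) · P_T`:
there is a unique pair `(i, m)` of an edge index `i` and a position `m` on `P` such
that the `m`-th edge of `P` is `u_i v_i`, all vertices of `P` up to position `m` lie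
in `R`, and all vertices after it lie in `T`. In particular `P` uses exactly one edge
of `F`, never re-enters `R` after leaving it, and never leaves `T` after entering it. -/
theorem simple_path_decomposition_of_nonredundant (n k : ℕ)
    (E : Fin n → Fin n → Prop)
    (R T : Set (Fin n)) (hR : IsSCC E R) (hT : IsSCC E T) (hRT : R ≠ T)
    (u v : Fin k → Fin n) (hu : ∀ i, u i ∈ R) (hv : ∀ i, v i ∈ T)
    (hEdge : ∀ i, E (u i) (v i))
    (hinj : Function.Injective fun i => (u i, v i))
    (hall : ∀ a b, E a b → a ∈ R → b ∈ T → ∃ i, a = u i ∧ b = v i)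
    (r t : Fin n) (hr : r ∈ R) (ht : t ∈ T)
    (hnonred : ¬ ∀ a b, Relation.ReflTransGen E a b ↔
        Relation.ReflTransGen (fun a b => E a b ∧ ¬∃ i, a = u i ∧ b = v i) a b) :
    ∀ P : SPath n E r t,
      ∃! p : Fin k × Fin ((P.1 : ℕ)),
        P.2.1 p.2.castSucc = u p.1 ∧ P.2.1 p.2.succ = v p.1 ∧
        (∀ j : Fin ((P.1 : ℕ) + 1), (j : ℕ) ≤ (p.2 : ℕ) → P.2.1 j ∈ R) ∧
        (∀ j : Fin ((P.1 : ℕ) + 1), (p.2 : ℕ) + 1 ≤ (j : ℕ) → P.2.1 j ∈ T) := by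
  classical
  intro P
  set L : ℕ := ((P.1 : Fin n) : ℕ) with hLdef
  set f : Fin (L + 1) → Fin n := P.2.1 with hfdef
  have h0 : f 0 = r := P.2.2.2.1
  have hlast : f (Fin.last L) = t := P.2.2.2.2.1
  have hsteps : ∀ i2 : Fin L, E (f i2.castSucc) (f i2.succ) := P.2.2.2.2.2
  set E' : Fin n → Fin n → Prop := fun a b => E a b ∧ ¬∃ i, a = u i ∧ b = v i with hE'def
  -- disjointness of R and T
  have hdisj : ∀ x, x ∈ R → x ∈ T → False := by
    intro x hxR hxT
    apply hRT
    ext y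
    exact ⟨fun hyR => hT.2.2 x hxT y (hR.2.1 x hxR y hyR) (hR.2.1 y hyR x hxR),
           fun hyT => hR.2.2 x hxR y (hT.2.1 x hxT y hyT) (hT.2.1 y hyT x hxT)⟩
  have hnoF_R : ∀ a b, E a b → a ∈ R → b ∈ R → E' a b := fun a b he _ hb =>
    ⟨he, fun ⟨i, _, hi2⟩ => hdisj b hb (hi2 ▸ hv i)⟩
  have hnoF_T : ∀ a b, E a b → a ∈ T → b ∈ T → E' a b := fun a b he ha _ =>
    ⟨he, fun ⟨i, hi1, _⟩ => hdisj a (hi1 ▸ hu i) ha⟩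
  have hreachR : ∀ x ∈ R, ∀ y ∈ R, Relation.ReflTransGen E' x y := scc_reach' hR hnoF_R
  have hreachT : ∀ x ∈ T, ∀ y ∈ T, Relation.ReflTransGen E' x y := scc_reach' hT hnoF_T
  -- the walk as a function on ℕ
  have hminlt : ∀ m : ℕ, min m L < L + 1 := fun m => by omega
  set g : ℕ → Fin n := fun m => f ⟨min m L, hminlt m⟩ with hgdef
  have hgj : ∀ j : Fin (L + 1), g (j : ℕ) = f j := by
    intro j
    have hj := j.isLt
    simp only [hgdef]
    exact congrArg f (Fin.ext (by simp only []; omega))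
  have hg0 : g 0 = r := by
    have := hgj 0
    simpa using this.symm ▸ h0
  have hgL : g L = t := by
    have := hgj (Fin.last L)
    simp only [Fin.val_last] at this
    rw [this]; exact hlast
  have hedge : ∀ m, m < L → E (g m) (g (m + 1)) := by
    intro m hm
    have e1 : g m = f ((⟨m, hm⟩ : Fin L).castSucc) := by
      simp only [hgdef]
      exact congrArg f (Fin.ext (by simp only [Fin.coe_castSucc]; omega))
    have e2 : g (m + 1) = f ((⟨m, hm⟩ : Fin L).succ) := by
      simp only [hgdef]
      exact congrArg f (Fin.ext (by simp only [Fin.val_succ]; omega))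
    rw [e1, e2]; exact hsteps ⟨m, hm⟩
  have hreach : ∀ a b : ℕ, a ≤ b → b ≤ L → Relation.ReflTransGen E (g a) (g b) :=
    fun a b hab hbL => chain_reach' E g a b hab (fun m _ h2 => hedge m (by omega))
  have hrt : Relation.ReflTransGen E r t := by
    have := hreach 0 L (Nat.zero_le _) le_rfl
    rwa [hg0, hgL] at this
  -- Claim A: every vertex of the walk lies in R ∪ T
  have claimA : ∀ e, e ≤ L → g e ∈ R ∨ g e ∈ T := by
    intro e heL
    by_contra hw
    push_neg at hw
    obtain ⟨hwR, hwT⟩ := hw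
    have hpreT : ∀ e', e' ≤ e → g e' ∉ T := by
      intro e' he' hT'
      apply hwT
      refine hT.2.2 t ht (g e) ?_ ?_
      · exact (hT.2.1 t ht (g e') hT').trans (hreach e' e he' heL)
      · have := hreach e L heL le_rfl; rwa [hgL] at this
    have hpostR : ∀ e', e ≤ e' → e' ≤ L → g e' ∉ R := by
      intro e' h1 h2 hR'
      apply hwR
      refine hR.2.2 r hr (g e) ?_ ?_
      · have := hreach 0 e (Nat.zero_le _) heL; rwa [hg0] at this
      · exact (hreach e e' h1 h2).trans (hR.2.1 (g e') hR' r hr)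
    -- last position in R
    set d := Nat.findGreatest (fun m => g m ∈ R) L with hd
    have hdR : g d ∈ R := Nat.findGreatest_spec (P := fun m => g m ∈ R)
      (Nat.zero_le L) (show g 0 ∈ R by rw [hg0]; exact hr)
    have hdL : d ≤ L := Nat.findGreatest_le L
    have hdmax : ∀ m, d < m → m ≤ L → g m ∉ R := fun m h1 h2 =>
      Nat.findGreatest_is_greatest h1 h2
    have hde : d < e := by
      by_contra h
      push_neg at h
      exact hpostR d h hdL hdR
    -- first position in T
    have hcex : ∃ m, m ≤ L ∧ g m ∈ T := ⟨L, le_rfl, by rw [hgL]; exact ht⟩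
    set c := Nat.find hcex with hc
    obtain ⟨hcL, hcT⟩ := Nat.find_spec hcex
    have hcmin : ∀ m, m < c → ¬(m ≤ L ∧ g m ∈ T) := fun m hm => Nat.find_min hcex hm
    have hec : e < c := by
      by_contra h
      push_neg at h
      exact hpreT c h hcT
    -- no F-edge between d and c
    have hnoF : ∀ m, d ≤ m → m < c → E' (g m) (g (m + 1)) := by
      intro m h1 h2
      refine ⟨hedge m (by omega), ?_⟩
      rintro ⟨i, hi1, hi2⟩
      have hmd : m = d := by
        by_contra h
        exact hdmax m (by omega) (by omega) (hi1 ▸ hu i)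
      have hcm : c ≤ m + 1 := by
        by_contra h
        exact (hcmin (m + 1) (by omega)) ⟨by omega, hi2 ▸ hv i⟩
      omega
    have hcross : Relation.ReflTransGen E' (g d) (g c) :=
      chain_reach' E' g d c (by omega) hnoF
    -- so deleting F does not change reachability: contradiction
    apply hnonred
    intro a b
    constructor
    · intro hab
      induction hab with
      | refl => exact .refl
      | tail hpre hstep ih =>
        rename_i x y
        by_cases hFe : ∃ i, x = u i ∧ y = v i
        · obtain ⟨i, rfl, rfl⟩ := hFe
          exact ih.trans ((hreachR (u i) (hu i) (g d) hdR).trans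
            (hcross.trans (hreachT (g c) hcT (v i) (hv i))))
        · exact ih.tail ⟨hstep, hFe⟩
    · intro hab
      exact Relation.ReflTransGen.mono (fun a b (h : E' a b) => h.1) _ _ hab
  -- Claim B: no step from T back to R
  have claimB : ∀ m, m < L → g m ∈ T → g (m + 1) ∈ R → False := by
    intro m hm h1 h2
    refine hdisj t (hR.2.2 r hr t hrt ?_) ht
    exact (hT.2.1 t ht (g m) h1).trans
      ((Relation.ReflTransGen.single (hedge m hm)).trans (hR.2.1 (g (m + 1)) h2 r hr))
  -- once in T, stay in T
  have monoT : ∀ m, g m ∈ T → ∀ m', m ≤ m' → m' ≤ L → g m' ∈ T := by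
    intro m hmT m' hmm'
    induction m', hmm' using Nat.le_induction with
    | base => intro _; exact hmT
    | succ m' hmm' ih =>
      intro hm'L
      have h1 : g m' ∈ T := ih (by omega)
      rcases claimA (m' + 1) hm'L with h2 | h2
      · exact absurd h2 (fun h2 => claimB m' (by omega) h1 h2)
      · exact h2
  -- the crossing position
  have hcex : ∃ m2, m2 ≤ L ∧ g m2 ∈ T := ⟨L, le_rfl, by rw [hgL]; exact ht⟩
  set c := Nat.find hcex with hc
  obtain ⟨hcL, hcT⟩ := Nat.find_spec hcex
  have hc0 : c ≠ 0 := by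
    intro h
    apply hdisj r hr
    rw [← hg0, ← h]
    exact hcT
  set m := c - 1 with hmdef
  have hmc : m + 1 = c := by omega
  have hmT' : g m ∉ T := fun h => Nat.find_min hcex (show m < c by omega) ⟨by omega, h⟩
  have hmR : g m ∈ R := (claimA m (by omega)).resolve_right hmT'
  have hmL : m < L := by omega
  obtain ⟨i, hui, hvi⟩ := hall (g m) (g (m + 1)) (hedge m hmL) hmR (by rw [hmc]; exact hcT)
  have cond1 : f ((⟨m, hmL⟩ : Fin L).castSucc) = u i := by
    have e1 := hgj ((⟨m, hmL⟩ : Fin L).castSucc)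
    simp only [Fin.coe_castSucc] at e1
    rw [← e1]; exact hui
  have cond2 : f ((⟨m, hmL⟩ : Fin L).succ) = v i := by
    have e1 := hgj ((⟨m, hmL⟩ : Fin L).succ)
    simp only [Fin.val_succ] at e1
    rw [← e1]; exact hvi
  have cond3 : ∀ j : Fin (L + 1), (j : ℕ) ≤ m → f j ∈ R := by
    intro j hj
    have hjL := j.isLt
    rw [← hgj j]
    have hnT : g (j : ℕ) ∉ T := fun h =>
      Nat.find_min hcex (show (j : ℕ) < c by omega) ⟨by omega, h⟩
    exact (claimA (j : ℕ) (by omega)).resolve_right hnT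
  have cond4 : ∀ j : Fin (L + 1), m + 1 ≤ (j : ℕ) → f j ∈ T := by
    intro j hj
    have hjL := j.isLt
    rw [← hgj j]
    exact monoT c hcT (j : ℕ) (by omega) (by omega)
  refine ⟨⟨i, ⟨m, hmL⟩⟩, ⟨cond1, cond2, cond3, cond4⟩, ?_⟩
  rintro ⟨i', m'⟩ ⟨hq1, hq2, hq3, hq4⟩
  have hm' : (m' : ℕ) = m := by
    by_contra hne
    rcases Nat.lt_or_ge (m' : ℕ) m with h | h
    · have hjT : f m'.succ ∈ T := hq4 m'.succ (by simp [Fin.val_succ])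
      have hjR : f m'.succ ∈ R := cond3 m'.succ (by simp [Fin.val_succ]; omega)
      exact hdisj _ hjR hjT
    · have h' : m < (m' : ℕ) := by omega
      have hjT : f ((⟨m, hmL⟩ : Fin L).succ) ∈ T :=
        cond4 ((⟨m, hmL⟩ : Fin L).succ) (by simp [Fin.val_succ])
      have hjR : f ((⟨m, hmL⟩ : Fin L).succ) ∈ R :=
        hq3 ((⟨m, hmL⟩ : Fin L).succ) (by simp [Fin.val_succ]; omega)
      exact hdisj _ hjR hjT
  have hmm : m' = (⟨m, hmL⟩ : Fin L) := Fin.ext hm'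
  subst hmm
  have hui' : u i' = u i := by rw [← hq1, cond1]
  have hvi' : v i' = v i := by rw [← hq2, cond2]
  have : i' = i := hinj (show (u i', v i') = (u i, v i) by rw [hui', hvi'])
  rw [this]
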